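/- Let λ, μ be real numbers with λ > 1 and μ > 1. Then there exists W such that for every integer w ≥ W, the polynomial D_w(p) = (1 − λ²p²)(1 − μ²p²) − (λ² − p²)(μ² − p²)p^{2w} has exactly 2w − 4 roots (counted with multiplicity) on the unit circle |p| = 1, and exactly 8 roots with |p| ≠ 1, all of which are real. -/

import Mathlib

open Polynomial

/-- The denominator polynomial `D_w(p) = (1 − λ²p²)(1 − μ²p²) − (λ² − p²)(μ² − p²)p^{2w}`,
viewed as a polynomial over `ℂ` with real parameters `λ, μ`. -/
noncomputable def Dpoly (lam mu : ℝ) (w : ℕ) : Polynomial ℂ :=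
  (1 - C ((lam : ℂ) ^ 2) * X ^ 2) * (1 - C ((mu : ℂ) ^ 2) * X ^ 2) -
    (C ((lam : ℂ) ^ 2) - X ^ 2) * (C ((mu : ℂ) ^ 2) - X ^ 2) * X ^ (2 * w)

open Real

set_option maxHeartbeats 1000000

lemma slit_mul (z w : ℂ) (h1 : 0 < z.re) (h2 : 0 < w.re) : z * w ∈ Complex.slitPlane := by
  rcases eq_or_ne ((z*w).im) 0 with h|h
  · left
    simp only [Complex.mul_im] at h
    simp only [Complex.mul_re]
    have key : z.re * (z.re * w.re - z.im * w.im) = w.re * (z.re^2 + z.im^2) := by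
      linear_combination (-z.im) * h
    have hpos : 0 < w.re * (z.re^2 + z.im^2) := by positivity
    nlinarith [key, hpos, h1]
  · right; exact h

lemma conj_exp_real_mul_I (x : ℝ) :
    (starRingEnd ℂ) (Complex.exp ((x:ℂ) * Complex.I)) = Complex.exp (((-x : ℝ):ℂ) * Complex.I) := by
  rw [← Complex.exp_conj]
  congr 1
  simp [Complex.conj_I]

noncomputable def uu (a b t : ℝ) : ℂ :=
  ((a:ℂ) - Complex.exp (((-(2*t) : ℝ):ℂ) * Complex.I)) *
    ((b:ℂ) - Complex.exp (((-(2*t) : ℝ):ℂ) * Complex.I))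

lemma uu_slit (a b : ℝ) (ha : 1 < a) (hb : 1 < b) (t : ℝ) : uu a b t ∈ Complex.slitPlane := by
  apply slit_mul
  · simp only [Complex.sub_re, Complex.ofReal_re, Complex.exp_ofReal_mul_I_re]
    nlinarith [Real.cos_le_one (-(2*t))]
  · simp only [Complex.sub_re, Complex.ofReal_re, Complex.exp_ofReal_mul_I_re]
    nlinarith [Real.cos_le_one (-(2*t))]

lemma uu_cont (a b : ℝ) : Continuous (uu a b) := by
  unfold uu
  fun_prop

noncomputable def psi (a b : ℝ) (m : ℕ) (t : ℝ) : ℝ := -(m:ℝ)*t + (uu a b t).arg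

lemma psi_cont (a b : ℝ) (ha : 1 < a) (hb : 1 < b) (m : ℕ) : Continuous (psi a b m) := by
  apply Continuous.add
  · fun_prop
  · rw [continuous_iff_continuousAt]
    intro t
    exact (Complex.continuousAt_arg (uu_slit a b ha hb t)).comp (uu_cont a b).continuousAt

lemma uu_zero (a b : ℝ) : uu a b 0 = (((a-1)*(b-1) : ℝ) : ℂ) := by
  simp only [uu, mul_zero, neg_zero, Complex.ofReal_zero, zero_mul, Complex.exp_zero]
  push_cast
  ring

lemma uu_two_pi (a b : ℝ) : uu a b (2*π) = (((a-1)*(b-1) : ℝ) : ℂ) := by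
  have h : Complex.exp (((-(2*(2*π)) : ℝ):ℂ) * Complex.I) = 1 := by
    have h2 := Complex.exp_int_mul_two_pi_mul_I (-2)
    rw [← h2]
    congr 1
    push_cast
    ring
  simp only [uu, h]
  push_cast
  ring

lemma psi_zero (a b : ℝ) (ha : 1 < a) (hb : 1 < b) (m : ℕ) : psi a b m 0 = 0 := by
  simp only [psi, uu_zero]
  rw [Complex.arg_ofReal_of_nonneg (by nlinarith)]
  ring

lemma psi_two_pi (a b : ℝ) (ha : 1 < a) (hb : 1 < b) (m : ℕ) :
    psi a b m (2*π) = -(m:ℝ)*(2*π) := by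
  simp only [psi, uu_two_pi]
  rw [Complex.arg_ofReal_of_nonneg (by nlinarith)]
  ring

lemma circle_root (lam mu : ℝ) (hlam : 1 < lam) (hmu : 1 < mu) (m : ℕ) (t : ℝ) (k : ℕ)
    (hψ : psi (lam^2) (mu^2) m t = -(k:ℝ)*π) :
    (Dpoly lam mu (m+2)).IsRoot (Complex.exp ((t:ℂ) * Complex.I)) := by
  have ha : 1 < lam^2 := by nlinarith
  have hb : 1 < mu^2 := by nlinarith
  set E := Complex.exp ((t:ℂ) * Complex.I) with hE
  set F := Complex.exp (((-(2*t) : ℝ):ℂ) * Complex.I) with hFdef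
  have hF : E^2 * F = 1 := by
    rw [hE, hFdef, ← Complex.exp_nat_mul, ← Complex.exp_add, ← Complex.exp_zero]
    congr 1
    push_cast
    ring
  set z := Complex.exp (((-((m:ℝ)*t) : ℝ):ℂ) * Complex.I) * uu (lam^2) (mu^2) t with hzdef
  have hz1 : z = ((‖uu (lam^2) (mu^2) t‖ : ℝ):ℂ) *
      Complex.exp (((psi (lam^2) (mu^2) m t : ℝ):ℂ) * Complex.I) := by
    rw [hzdef]
    conv_lhs => rw [← Complex.norm_mul_exp_arg_mul_I (uu (lam^2) (mu^2) t)]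
    rw [mul_comm, mul_assoc, ← Complex.exp_add]
    congr 2
    simp only [psi]
    push_cast
    ring
  have hzim : z.im = 0 := by
    rw [hz1]
    simp only [Complex.mul_im, Complex.ofReal_re, Complex.ofReal_im,
      Complex.exp_ofReal_mul_I_im, Complex.exp_ofReal_mul_I_re, hψ]
    simp [neg_mul, Real.sin_nat_mul_pi]
  have hconj : (starRingEnd ℂ) z = z := Complex.conj_eq_iff_im.mpr hzim
  have hconj2 : (starRingEnd ℂ) z =
      Complex.exp ((((m:ℝ)*t : ℝ):ℂ) * Complex.I) *
        ((((lam^2 : ℝ):ℂ) - Complex.exp (((2*t : ℝ):ℂ) * Complex.I)) *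
          (((mu^2 : ℝ):ℂ) - Complex.exp (((2*t : ℝ):ℂ) * Complex.I))) := by
    rw [hzdef]
    simp only [uu, map_mul, map_sub, Complex.conj_ofReal, conj_exp_real_mul_I, neg_neg]
  have hz0 : Complex.exp (((-((m:ℝ)*t) : ℝ):ℂ) * Complex.I) * uu (lam^2) (mu^2) t =
      Complex.exp ((((m:ℝ)*t : ℝ):ℂ) * Complex.I) *
        ((((lam^2 : ℝ):ℂ) - Complex.exp (((2*t : ℝ):ℂ) * Complex.I)) *
          (((mu^2 : ℝ):ℂ) - Complex.exp (((2*t : ℝ):ℂ) * Complex.I))) := by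
    rw [← hconj2, hconj, hzdef]
  have hEm : Complex.exp ((((m:ℝ)*t : ℝ):ℂ) * Complex.I) = E^m := by
    rw [hE, ← Complex.exp_nat_mul]
    congr 1
    push_cast
    ring
  have hE2 : Complex.exp (((2*t : ℝ):ℂ) * Complex.I) = E^2 := by
    rw [hE, ← Complex.exp_nat_mul]
    congr 1
    push_cast
    ring
  have hz' : uu (lam^2) (mu^2) t =
      E^(2*m) * ((((lam^2:ℝ):ℂ) - E^2) * (((mu^2:ℝ):ℂ) - E^2)) := by
    have h6 := congrArg (fun x => Complex.exp ((((m:ℝ)*t : ℝ):ℂ) * Complex.I) * x) hz0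
    rw [← mul_assoc, ← Complex.exp_add] at h6
    have h7 : ((((m:ℝ)*t : ℝ):ℂ) * Complex.I) + (((-((m:ℝ)*t) : ℝ):ℂ) * Complex.I) = 0 := by
      push_cast
      ring
    rw [h7, Complex.exp_zero, one_mul, ← mul_assoc, hEm, hE2] at h6
    rw [h6]
    ring
  have heval : (Dpoly lam mu (m+2)).eval E =
      (1 - (lam:ℂ)^2*E^2)*(1 - (mu:ℂ)^2*E^2) -
        ((lam:ℂ)^2 - E^2)*((mu:ℂ)^2 - E^2)*E^(2*(m+2)) := by
    simp only [Dpoly, eval_sub, eval_mul, eval_one, eval_pow, eval_X, eval_C]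
  rw [Polynomial.IsRoot, heval]
  simp only [uu, ← hFdef] at hz'
  push_cast at hz'
  linear_combination (E^4) * hz' + (((lam:ℂ)^2+(mu:ℂ)^2)*E^2 - 1 - E^2*F) * hF
lemma exp_inj_Ico {s t : ℝ} (hs : s ∈ Set.Ico 0 (2*π)) (ht : t ∈ Set.Ico 0 (2*π))
    (h : Complex.exp ((s:ℂ)*Complex.I) = Complex.exp ((t:ℂ)*Complex.I)) : s = t := by
  rw [Complex.exp_eq_exp_iff_exists_int] at h
  obtain ⟨n, hn⟩ := h
  have him := congrArg Complex.im hn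
  simp [Complex.add_im, Complex.mul_im] at him
  have hπ := Real.pi_pos
  obtain ⟨hs0, hs2⟩ := hs
  obtain ⟨ht0, ht2⟩ := ht
  have hn0 : n = 0 := by
    have h1 : -1 < (n:ℝ) := by nlinarith
    have h2 : (n:ℝ) < 1 := by nlinarith
    have h3 : (-1 : ℤ) < n := by exact_mod_cast h1
    have h4 : n < (1:ℤ) := by exact_mod_cast h2
    omega
  rw [hn0] at him
  simpa using him

open scoped Classical in
/-- for `λ > 1` and `μ > 1`, for all sufficiently large `w` the polynomial
`D_w` has exactly `2w − 4` roots (with multiplicity) on the unit circle and exactly `8`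
roots off the unit circle, all of which are real. -/
theorem root_count_both_adsorbed (lam mu : ℝ) (hlam : 1 < lam) (hmu : 1 < mu) :
    ∃ W : ℕ, ∀ w : ℕ, W ≤ w →
      ((Dpoly lam mu w).roots.filter (fun p => ‖p‖ = 1)).card = 2 * w - 4 ∧
      ((Dpoly lam mu w).roots.filter (fun p => ‖p‖ ≠ 1)).card = 8 ∧
      ∀ p ∈ (Dpoly lam mu w).roots, ‖p‖ ≠ 1 → p.im = 0 := by
  have ha : 1 < lam^2 := by nlinarith
  have hb : 1 < mu^2 := by nlinarith
  have ha0 : (0:ℝ) < lam^2 := by positivity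
  have hb0 : (0:ℝ) < mu^2 := by positivity
  have hπ := Real.pi_pos
  -- choose ε
  obtain ⟨ε, hε0, hε1, hεa, hεb, hainv⟩ :
      ∃ ε : ℝ, 0 < ε ∧ ε < 1 ∧ lam^2*ε ≤ (lam^2-1)/2 ∧ mu^2*ε ≤ (mu^2-1)/2 ∧
        (lam^2)⁻¹ < 1-ε := by
    refine ⟨min ((lam^2-1)/(2*lam^2)) ((mu^2-1)/(2*mu^2)), ?_, ?_, ?_, ?_, ?_⟩
    · exact lt_min (div_pos (by linarith) (by linarith)) (div_pos (by linarith) (by linarith))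
    · calc min ((lam^2-1)/(2*lam^2)) ((mu^2-1)/(2*mu^2)) ≤ (lam^2-1)/(2*lam^2) :=
          min_le_left _ _
        _ < 1 := by rw [div_lt_one (by linarith)]; linarith
    · have h1 : min ((lam^2-1)/(2*lam^2)) ((mu^2-1)/(2*mu^2)) ≤ (lam^2-1)/(2*lam^2) :=
        min_le_left _ _
      have h2 : lam^2 * ((lam^2-1)/(2*lam^2)) = (lam^2-1)/2 := by field_simp
      nlinarith [mul_le_mul_of_nonneg_left h1 (le_of_lt ha0)]
    · have h1 : min ((lam^2-1)/(2*lam^2)) ((mu^2-1)/(2*mu^2)) ≤ (mu^2-1)/(2*mu^2) :=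
        min_le_right _ _
      have h2 : mu^2 * ((mu^2-1)/(2*mu^2)) = (mu^2-1)/2 := by field_simp
      nlinarith [mul_le_mul_of_nonneg_left h1 (le_of_lt hb0)]
    · have h1 : min ((lam^2-1)/(2*lam^2)) ((mu^2-1)/(2*mu^2)) ≤ (lam^2-1)/(2*lam^2) :=
        min_le_left _ _
      have h2 : (lam^2-1)/(2*lam^2) < (lam^2-1)/lam^2 :=
        div_lt_div_of_pos_left (by linarith) (by linarith) (by linarith)
      have h3 : (lam^2-1)/lam^2 = 1 - (lam^2)⁻¹ := by field_simp
      linarith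
  -- constants
  set C1 : ℝ := (lam^2-1+ε)*(mu^2-1+ε) with hC1def
  set C2 : ℝ := (lam^2-1-lam^2*ε)*(mu^2-1-mu^2*ε) with hC2def
  have hC1 : 0 < C1 := by rw [hC1def]; nlinarith
  have hC2 : 0 < C2 := by rw [hC2def]; nlinarith
  -- choose W₀
  have htend := tendsto_pow_atTop_nhds_zero_of_lt_one (by linarith : (0:ℝ) ≤ 1-ε)
    (by linarith : 1-ε < 1)
  have hev : ∀ᶠ n in Filter.atTop, (1-ε)^n < C2/C1 :=
    htend.eventually (gt_mem_nhds (by positivity))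
  obtain ⟨W₀, hW₀⟩ := Filter.eventually_atTop.mp hev
  refine ⟨max W₀ 3, ?_⟩
  intro w hw
  obtain ⟨m, rfl⟩ : ∃ m, w = m+2 := ⟨w-2, by omega⟩
  have hm3 : 3 ≤ m+2 := le_trans (le_max_right _ _) hw
  have hm1 : 1 ≤ m := by omega
  -- the real q-polynomial
  set g : ℝ → ℝ := fun q => (1 - lam^2*q)*(1 - mu^2*q) - (lam^2 - q)*(mu^2 - q)*q^(m+2)
    with hgdef
  have hgc : Continuous g := by rw [hgdef]; fun_prop
  have hg0 : g 0 = 1 := by simp [hgdef]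
  have hga : g (lam^2)⁻¹ < 0 := by
    have hinv1 : ((lam^2)⁻¹:ℝ) < 1 := inv_lt_one_of_one_lt₀ ha
    have hinv0 : (0:ℝ) < (lam^2)⁻¹ := inv_pos.mpr ha0
    have hY : (0:ℝ) < (lam^2 - (lam^2)⁻¹) * (mu^2 - (lam^2)⁻¹) * ((lam^2)⁻¹)^(m+2) :=
      mul_pos (mul_pos (by linarith) (by linarith)) (by positivity)
    simp only [hgdef]
    rw [mul_inv_cancel₀ (ne_of_gt ha0)]
    nlinarith [hY]
  have hg1ε : 0 < g (1-ε) := by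
    have hWm : W₀ ≤ m+2 := le_trans (le_max_left _ _) hw
    have hpow : (1-ε)^(m+2) < C2/C1 := hW₀ (m+2) hWm
    have h2 : C1 * (1-ε)^(m+2) < C2 := by
      have h3 := mul_lt_mul_of_pos_left hpow hC1
      rwa [mul_div_cancel₀ _ (ne_of_gt hC1)] at h3
    have h4 : g (1-ε) = C2 - C1*(1-ε)^(m+2) := by
      simp only [hgdef, hC1def, hC2def]; ring
    linarith
  -- the four q-roots
  obtain ⟨q₁, hq₁mem, hgq₁⟩ := intermediate_value_Ioo' (le_of_lt (inv_pos.mpr ha0))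
    hgc.continuousOn (show (0:ℝ) ∈ Set.Ioo (g (lam^2)⁻¹) (g 0) by
      rw [hg0]; exact ⟨hga, one_pos⟩)
  obtain ⟨q₂, hq₂mem, hgq₂⟩ := intermediate_value_Ioo (le_of_lt hainv)
    hgc.continuousOn (show (0:ℝ) ∈ Set.Ioo (g (lam^2)⁻¹) (g (1-ε)) from ⟨hga, hg1ε⟩)
  obtain ⟨hq₁0, hq₁u⟩ := hq₁mem
  obtain ⟨hq₂l, hq₂u⟩ := hq₂mem
  have hq₂0 : 0 < q₂ := lt_trans (inv_pos.mpr ha0) hq₂l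
  have hq₁q₂ : q₁ < q₂ := lt_trans hq₁u hq₂l
  have hq₂1 : q₂ < 1 := by linarith
  have hq₁1 : q₁ < 1 := by linarith
  -- inversion
  have hginv : ∀ q : ℝ, 0 < q → g q = 0 → g q⁻¹ = 0 := by
    intro q hq hgq
    have hident : q^(m+4) * g q⁻¹ = -g q := by
      simp only [hgdef]
      have hu : q * q⁻¹ = 1 := mul_inv_cancel₀ (ne_of_gt hq)
      have h1 : q^(m+4) * q⁻¹^(m+2) = q^2 := by
        have h2 : q^(m+4) * q⁻¹^(m+2) = (q*q⁻¹)^(m+2) * q^2 := by ring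
        rw [h2, hu, one_pow, one_mul]
      linear_combination (-(lam^2-q⁻¹)*(mu^2-q⁻¹))*h1 +
        (q^(m+2)*(-(lam^2+mu^2)*q + lam^2*mu^2*(q*q⁻¹+1)) - (-(lam^2+mu^2)*q + (q*q⁻¹+1)))*hu
    rw [hgq, neg_zero] at hident
    rcases mul_eq_zero.mp hident with h|h
    · exact absurd h (pow_ne_zero _ (ne_of_gt hq))
    · exact h
  -- square roots
  set s₁ : ℝ := Real.sqrt q₁ with hs₁def
  set s₂ : ℝ := Real.sqrt q₂ with hs₂def
  have hs₁0 : 0 < s₁ := Real.sqrt_pos.mpr hq₁0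
  have hs₂0 : 0 < s₂ := Real.sqrt_pos.mpr hq₂0
  have hs₁sq : s₁^2 = q₁ := Real.sq_sqrt hq₁0.le
  have hs₂sq : s₂^2 = q₂ := Real.sq_sqrt hq₂0.le
  have hs₁s₂ : s₁ < s₂ := by rw [hs₁def, hs₂def]; exact Real.sqrt_lt_sqrt hq₁0.le hq₁q₂
  have hs₂1 : s₂ < 1 := by
    have h := Real.sqrt_lt_sqrt hq₂0.le hq₂1
    rwa [Real.sqrt_one] at h
  have hs₁1 : s₁ < 1 := by linarith
  have hs₁i : s₁ * s₁⁻¹ = 1 := mul_inv_cancel₀ (ne_of_gt hs₁0)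
  have hs₂i : s₂ * s₂⁻¹ = 1 := mul_inv_cancel₀ (ne_of_gt hs₂0)
  have hs₁ipos : 0 < s₁⁻¹ := inv_pos.mpr hs₁0
  have hs₂ipos : 0 < s₂⁻¹ := inv_pos.mpr hs₂0
  have hs₁igt : 1 < s₁⁻¹ := (one_lt_inv₀ hs₁0).mpr hs₁1
  have hs₂igt : 1 < s₂⁻¹ := (one_lt_inv₀ hs₂0).mpr hs₂1
  have hs₂is₁i : s₂⁻¹ < s₁⁻¹ := by rw [inv_lt_inv₀ hs₂0 hs₁0]; exact hs₁s₂
  -- the list of 8 off-circle real roots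
  set Lo : List ℝ := [-s₁⁻¹, -s₂⁻¹, -s₂, -s₁, s₁, s₂, s₂⁻¹, s₁⁻¹] with hLodef
  have hchain : Lo.Chain' (· < ·) := by
    simp only [hLodef, List.Chain', List.isChain_cons_cons, List.IsChain.singleton, and_true]
    refine ⟨by linarith, by linarith, by linarith, by linarith, by linarith,
      by linarith, by linarith⟩
  have hnodup : Lo.Nodup := (List.isChain_iff_pairwise.mp hchain).imp ne_of_lt
  have hLolen : Lo.length = 8 := by simp [hLodef]
  -- evaluation of D at real points
  have hDre : ∀ x : ℝ, (Dpoly lam mu (m+2)).eval (x:ℂ) = ((g (x^2) : ℝ) : ℂ) := by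
    intro x
    simp only [Dpoly, eval_sub, eval_mul, eval_one, eval_pow, eval_X, eval_C, hgdef]
    push_cast
    ring
  -- all list elements give roots
  have hLo_root : ∀ r ∈ Lo, g (r^2) = 0 := by
    intro r hr
    simp only [hLodef, List.mem_cons, List.not_mem_nil, or_false] at hr
    rcases hr with rfl|rfl|rfl|rfl|rfl|rfl|rfl|rfl <;>
      simp only [neg_sq, inv_pow, hs₁sq, hs₂sq] <;>
      first
        | exact hgq₁
        | exact hgq₂
        | exact hginv _ hq₁0 hgq₁
        | exact hginv _ hq₂0 hgq₂
  have hLo_abs : ∀ r ∈ Lo, |r| ≠ 1 := by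
    intro r hr
    simp only [hLodef, List.mem_cons, List.not_mem_nil, or_false] at hr
    rcases hr with rfl|rfl|rfl|rfl|rfl|rfl|rfl|rfl
    · rw [abs_neg, abs_of_pos hs₁ipos]; exact ne_of_gt hs₁igt
    · rw [abs_neg, abs_of_pos hs₂ipos]; exact ne_of_gt hs₂igt
    · rw [abs_neg, abs_of_pos hs₂0]; exact ne_of_lt hs₂1
    · rw [abs_neg, abs_of_pos hs₁0]; exact ne_of_lt hs₁1
    · rw [abs_of_pos hs₁0]; exact ne_of_lt hs₁1
    · rw [abs_of_pos hs₂0]; exact ne_of_lt hs₂1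
    · rw [abs_of_pos hs₂ipos]; exact ne_of_gt hs₂igt
    · rw [abs_of_pos hs₁ipos]; exact ne_of_gt hs₁igt
  -- circle part
  have hψcont := psi_cont (lam^2) (mu^2) ha hb m
  have key : ∀ k : ℕ, ∃ t : ℝ, k < 2*m →
      (t ∈ Set.Ico 0 (2*π) ∧ psi (lam^2) (mu^2) m t = -(k:ℝ)*π) := by
    intro k
    by_cases hk : k < 2*m
    · rcases Nat.eq_zero_or_pos k with hk0|hk0
      · refine ⟨0, fun _ => ⟨⟨le_refl 0, by positivity⟩, ?_⟩⟩
        rw [psi_zero _ _ ha hb, hk0]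
        simp
      · have h1 : psi (lam^2) (mu^2) m (2*π) < -(k:ℝ)*π := by
          rw [psi_two_pi _ _ ha hb]
          have hkr : (k:ℝ) < 2*m := by exact_mod_cast hk
          nlinarith only [hπ, hkr]
        have h2 : -(k:ℝ)*π < psi (lam^2) (mu^2) m 0 := by
          rw [psi_zero _ _ ha hb]
          have hkr : (1:ℝ) ≤ (k:ℝ) := by exact_mod_cast hk0
          nlinarith only [hπ, hkr]
        obtain ⟨t, ht, hψt⟩ := intermediate_value_Ioo' (by positivity : (0:ℝ) ≤ 2*π)
          hψcont.continuousOn ⟨h1, h2⟩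
        exact ⟨t, fun _ => ⟨⟨ht.1.le, ht.2⟩, hψt⟩⟩
    · exact ⟨0, fun h => absurd h hk⟩
  choose T hT using key
  -- the circle finset
  set circF : Finset ℂ :=
    (Finset.range (2*m)).image (fun k => Complex.exp ((T k : ℂ) * Complex.I)) with hcircdef
  have hcirc_abs : ∀ x ∈ circF, ‖x‖ = 1 := by
    intro x hx
    rw [hcircdef, Finset.mem_image] at hx
    obtain ⟨k, hk, rfl⟩ := hx
    exact Complex.norm_exp_ofReal_mul_I _
  have hcirc_card : circF.card = 2*m := by
    rw [hcircdef, Finset.card_image_of_injOn, Finset.card_range]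
    intro k hk k' hk' hexp
    simp only [Finset.coe_range, Set.mem_Iio] at hk hk'
    have hTk := hT k hk
    have hTk' := hT k' hk'
    have heq := exp_inj_Ico hTk.1 hTk'.1 hexp
    have hval : -(k:ℝ)*π = -(k':ℝ)*π := by rw [← hTk.2, ← hTk'.2, heq]
    have h9 : (k:ℝ) * π = (k':ℝ) * π := by linarith only [hval]
    have h10 := mul_right_cancel₀ (ne_of_gt hπ) h9
    exact_mod_cast h10
  have hcirc_root : ∀ x ∈ circF, (Dpoly lam mu (m+2)).IsRoot x := by
    intro x hx
    rw [hcircdef, Finset.mem_image] at hx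
    obtain ⟨k, hk, rfl⟩ := hx
    rw [Finset.mem_range] at hk
    exact circle_root lam mu hlam hmu m (T k) k ((hT k hk).2)
  -- the off-circle finset
  set Fo : Finset ℂ := Lo.toFinset.image (fun r : ℝ => (r:ℂ)) with hFodef
  have hFo_card : Fo.card = 8 := by
    rw [hFodef, Finset.card_image_of_injOn (Complex.ofReal_injective.injOn),
      List.toFinset_card_of_nodup hnodup, hLolen]
  have hFo_elt : ∀ x ∈ Fo, ∃ r : ℝ, r ∈ Lo ∧ (r:ℂ) = x := by
    intro x hx
    rw [hFodef, Finset.mem_image] at hx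
    obtain ⟨r, hr, rfl⟩ := hx
    exact ⟨r, List.mem_toFinset.mp hr, rfl⟩
  have hFo_abs : ∀ x ∈ Fo, ‖x‖ ≠ 1 := by
    intro x hx
    obtain ⟨r, hr, rfl⟩ := hFo_elt x hx
    rw [Complex.norm_real, Real.norm_eq_abs]
    exact hLo_abs r hr
  have hFo_root : ∀ x ∈ Fo, (Dpoly lam mu (m+2)).IsRoot x := by
    intro x hx
    obtain ⟨r, hr, rfl⟩ := hFo_elt x hx
    rw [Polynomial.IsRoot, hDre r, hLo_root r hr]
    exact Complex.ofReal_zero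
  have hFo_im : ∀ x ∈ Fo, x.im = 0 := by
    intro x hx
    obtain ⟨r, hr, rfl⟩ := hFo_elt x hx
    exact Complex.ofReal_im r
  -- union
  have hdisj : Disjoint circF Fo := by
    rw [Finset.disjoint_left]
    intro x hx hx'
    exact hFo_abs x hx' (hcirc_abs x hx)
  set S : Finset ℂ := circF.disjUnion Fo hdisj with hSdef
  have hS_card : S.card = 2*m + 8 := by
    rw [hSdef, Finset.card_disjUnion, hcirc_card, hFo_card]
  -- degree and nonvanishing
  have hD0 : Dpoly lam mu (m+2) ≠ 0 := by
    intro h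
    have h1 : (Dpoly lam mu (m+2)).eval 0 = 1 := by simp [Dpoly]
    rw [h] at h1
    simp at h1
  have hdeg : (Dpoly lam mu (m+2)).natDegree ≤ 2*m+8 := by
    unfold Dpoly
    compute_degree
    all_goals omega
  -- all of S are roots
  have hle : S.val ≤ (Dpoly lam mu (m+2)).roots := by
    rw [Multiset.le_iff_subset S.nodup]
    intro x hx
    have hx' : x ∈ S := hx
    rw [hSdef, Finset.mem_disjUnion] at hx'
    rw [Polynomial.mem_roots']
    refine ⟨hD0, ?_⟩
    rcases hx' with hx'|hx'
    · exact hcirc_root x hx'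
    · exact hFo_root x hx'
  have hcard_le : Multiset.card (Dpoly lam mu (m+2)).roots ≤ Multiset.card S.val := by
    calc Multiset.card (Dpoly lam mu (m+2)).roots ≤ (Dpoly lam mu (m+2)).natDegree :=
          Polynomial.card_roots' _
      _ ≤ 2*m+8 := hdeg
      _ = Multiset.card S.val := by rw [← hS_card]; rfl
  have hroots : (Dpoly lam mu (m+2)).roots = circF.val + Fo.val := by
    rw [← Multiset.eq_of_le_of_card_le hle hcard_le]
    rfl
  -- conclude
  refine ⟨?_, ?_, ?_⟩
  · rw [hroots, Multiset.filter_add]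
    rw [Multiset.filter_eq_self.mpr (fun x hx => hcirc_abs x (Finset.mem_val.mp hx)),
      Multiset.filter_eq_nil.mpr (fun x hx => hFo_abs x (Finset.mem_val.mp hx))]
    rw [add_zero]
    have h8 : Multiset.card circF.val = 2*m := hcirc_card
    omega
  · rw [hroots, Multiset.filter_add]
    rw [Multiset.filter_eq_nil.mpr
        (fun x hx => not_not_intro (hcirc_abs x (Finset.mem_val.mp hx))),
      Multiset.filter_eq_self.mpr (fun x hx => hFo_abs x (Finset.mem_val.mp hx))]
    rw [zero_add]
    exact hFo_card
  · intro p hp hne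
    rw [hroots] at hp
    rcases Multiset.mem_add.mp hp with h|h
    · exact absurd (hcirc_abs p (Finset.mem_val.mp h)) hne
    · exact hFo_im p (Finset.mem_val.mp h)
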